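/- Let V : ℝ^{m×n} → ℝ^{M×N} be differentiable at U and suppose V(U) has full column rank, with P⊥(U) = I − V(U)V(U)⁺. Then for each entry (j,k), the derivative of the residual r(U) = P⊥(U) f in the direction of U_{jk} is ∂r/∂U_{jk} = −[ P⊥ (∂V/∂U_{jk}) V⁺ + (P⊥ (∂V/∂U_{jk}) V⁺)ᵀ ] f, evaluated at U. -/

import Mathlib

open Matrix

attribute [local instance] Matrix.linftyOpNormedAddCommGroup Matrix.linftyOpNormedSpace
  Matrix.linftyOpNormedRing Matrix.linftyOpNormedAlgebra

section aux
variable {a b c : ℕ} {x : ℝ}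

theorem hasDerivAt_entry {F : ℝ → Matrix (Fin a) (Fin b) ℝ} {F' : Matrix (Fin a) (Fin b) ℝ}
    (h : HasDerivAt F F' x) (i : Fin a) (j : Fin b) :
    HasDerivAt (fun t => F t i j) (F' i j) x := by
  let L : Matrix (Fin a) (Fin b) ℝ →ₗ[ℝ] ℝ :=
    { toFun := fun A => A i j, map_add' := by intros; rfl, map_smul' := by intros; rfl }
  exact (L.toContinuousLinearMap.hasFDerivAt.comp_hasDerivAt x h)

theorem hasDerivAt_of_entries {F : ℝ → Matrix (Fin a) (Fin b) ℝ} {F' : Matrix (Fin a) (Fin b) ℝ}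
    (h : ∀ i j, HasDerivAt (fun t => F t i j) (F' i j) x) :
    HasDerivAt F F' x := by
  have key : ∀ (t : ℝ), F t = ∑ i : Fin a, ∑ j : Fin b, F t i j • Matrix.single i j 1 := by
    intro t
    conv_lhs => rw [matrix_eq_sum_single (F t)]
    simp [smul_single]
  have key' : F' = ∑ i : Fin a, ∑ j : Fin b, F' i j • Matrix.single i j 1 := by
    conv_lhs => rw [matrix_eq_sum_single F']
    simp [smul_single]
  rw [show F = fun t => ∑ i : Fin a, ∑ j : Fin b, F t i j • Matrix.single i j 1 from funext key,
    key']
  exact HasDerivAt.fun_sum fun i _ => HasDerivAt.fun_sum fun j _ => (h i j).smul_const _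

theorem hasDerivAt_mtranspose {F : ℝ → Matrix (Fin a) (Fin b) ℝ} {F' : Matrix (Fin a) (Fin b) ℝ}
    (h : HasDerivAt F F' x) :
    HasDerivAt (fun t => (F t)ᵀ) F'ᵀ x :=
  hasDerivAt_of_entries fun i j => hasDerivAt_entry h j i

theorem hasDerivAt_mmul {F : ℝ → Matrix (Fin a) (Fin b) ℝ} {F' : Matrix (Fin a) (Fin b) ℝ}
    {G : ℝ → Matrix (Fin b) (Fin c) ℝ} {G' : Matrix (Fin b) (Fin c) ℝ}
    (hF : HasDerivAt F F' x) (hG : HasDerivAt G G' x) :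
    HasDerivAt (fun t => F t * G t) (F' * G x + F x * G') x := by
  refine hasDerivAt_of_entries fun i j => ?_
  have : ∀ t, (F t * G t) i j = ∑ p : Fin b, F t i p * G t p j := fun t => Matrix.mul_apply
  simp only [this]
  have hd : HasDerivAt (fun t => ∑ p : Fin b, F t i p * G t p j)
      (∑ p : Fin b, (F' i p * G x p j + F x i p * G' p j)) x :=
    HasDerivAt.fun_sum fun p _ => (hasDerivAt_entry hF i p).mul (hasDerivAt_entry hG p j)
  convert hd using 1
  simp [Matrix.add_apply, Matrix.mul_apply, Finset.sum_add_distrib]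

theorem hasDerivAt_minv {F : ℝ → Matrix (Fin a) (Fin a) ℝ} {F' : Matrix (Fin a) (Fin a) ℝ}
    (h : HasDerivAt F F' x) (hu : IsUnit (F x)) :
    HasDerivAt (fun t => (F t)⁻¹) (-((F x)⁻¹ * F' * (F x)⁻¹)) x := by
  have heq : (fun t => (F t)⁻¹) = fun t => Ring.inverse (F t) := by
    funext t; exact Matrix.nonsing_inv_eq_ringInverse _
  rw [heq]
  have hd := (hu.unit_spec ▸ hasFDerivAt_ringInverse (𝕜 := ℝ) hu.unit).comp_hasDerivAt x h
  convert hd using 1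
  · rfl
  · rfl
  · rfl
  · rfl
  have : (↑hu.unit⁻¹ : Matrix (Fin a) (Fin a) ℝ) = (F x)⁻¹ := by
    rw [Matrix.coe_units_inv, hu.unit_spec]
  simp [ContinuousLinearMap.mulLeftRight_apply, this, Matrix.mul_assoc]

end aux

/-- Golub–Pereyra variable projection derivative formula: for full column rank
`V(U)` (where `V⁺ = (VᵀV)⁻¹Vᵀ`), the derivative of the residual
`r(U) = (I − V V⁺) f` with respect to the entry `U_{jk}` is
`−[P⊥ (∂V/∂U_{jk}) V⁺ + (P⊥ (∂V/∂U_{jk}) V⁺)ᵀ] f`. -/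
theorem varpro_derivative (m n M N : ℕ)
    (V : Matrix (Fin m) (Fin n) ℝ → Matrix (Fin M) (Fin N) ℝ)
    (U : Matrix (Fin m) (Fin n) ℝ) (j : Fin m) (k : Fin n)
    (V' : Matrix (Fin M) (Fin N) ℝ)
    (hV' : ∀ (i : Fin M) (l : Fin N),
      HasDerivAt (fun t : ℝ => V (U + t • Matrix.single j k 1) i l)
        (V' i l) 0)
    (hrank : IsUnit ((V U).transpose * V U))
    (f : Fin M → ℝ) :
    let pinv : Matrix (Fin M) (Fin N) ℝ → Matrix (Fin N) (Fin M) ℝ :=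
      fun A => (A.transpose * A)⁻¹ * A.transpose
    let Pperp : Matrix (Fin M) (Fin M) ℝ := 1 - V U * pinv (V U)
    ∀ i : Fin M,
      HasDerivAt
        (fun t : ℝ =>
          (((1 - V (U + t • Matrix.single j k 1) *
                pinv (V (U + t • Matrix.single j k 1))).mulVec f) i))
        ((-((Pperp * V' * pinv (V U) +
              (Pperp * V' * pinv (V U)).transpose).mulVec f)) i) 0 := by
  intro pinv Pperp i
  set W : ℝ → Matrix (Fin M) (Fin N) ℝ :=
    fun t => V (U + t • Matrix.single j k 1) with hWdef
  have hW0 : W 0 = V U := by simp [hWdef]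
  set B : Matrix (Fin M) (Fin N) ℝ := V U with hB
  set G : Matrix (Fin N) (Fin N) ℝ := (Bᵀ * B)⁻¹ with hG
  -- derivative of W
  have hW : HasDerivAt W V' 0 := hasDerivAt_of_entries hV'
  -- derivative of A := Wᵀ * W
  have hA : HasDerivAt (fun t => (W t)ᵀ * W t) (V'ᵀ * B + Bᵀ * V') 0 := by
    have := hasDerivAt_mmul (hasDerivAt_mtranspose hW) hW
    rwa [hW0] at this
  -- derivative of G := A⁻¹
  have huA : IsUnit ((W 0)ᵀ * W 0) := by rw [hW0]; exact hrank
  have hGd : HasDerivAt (fun t => ((W t)ᵀ * W t)⁻¹)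
      (-(G * (V'ᵀ * B + Bᵀ * V') * G)) 0 := by
    have := hasDerivAt_minv hA huA
    rwa [hW0] at this
  -- derivative of pinv (W t) = G(t) * (W t)ᵀ
  have hQ : HasDerivAt (fun t => ((W t)ᵀ * W t)⁻¹ * (W t)ᵀ)
      ((-(G * (V'ᵀ * B + Bᵀ * V') * G)) * Bᵀ + G * V'ᵀ) 0 := by
    have := hasDerivAt_mmul hGd (hasDerivAt_mtranspose hW)
    rwa [hW0] at this
  -- derivative of W * pinv W
  have hX : HasDerivAt (fun t => W t * (((W t)ᵀ * W t)⁻¹ * (W t)ᵀ))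
      (V' * (G * Bᵀ) + B * ((-(G * (V'ᵀ * B + Bᵀ * V') * G)) * Bᵀ + G * V'ᵀ)) 0 := by
    have := hasDerivAt_mmul hW hQ
    rwa [hW0] at this
  -- derivative of P := 1 - W * pinv W
  have hP : HasDerivAt (fun t => (1 : Matrix (Fin M) (Fin M) ℝ) -
        W t * (((W t)ᵀ * W t)⁻¹ * (W t)ᵀ))
      (-(V' * (G * Bᵀ) + B * ((-(G * (V'ᵀ * B + Bᵀ * V') * G)) * Bᵀ + G * V'ᵀ))) 0 :=
    hX.const_sub 1
  -- the derivative matrix equals the claimed one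
  have hDeq : (-(V' * (G * Bᵀ) + B * ((-(G * (V'ᵀ * B + Bᵀ * V') * G)) * Bᵀ + G * V'ᵀ)))
      = -(Pperp * V' * pinv (V U) + (Pperp * V' * pinv (V U))ᵀ) := by
    have hGsym : Gᵀ = G := by
      rw [hG, Matrix.transpose_nonsing_inv, Matrix.transpose_mul, Matrix.transpose_transpose]
    have hPperp : Pperp = 1 - B * (G * Bᵀ) := by
      simp only [Pperp, pinv, hB, hG, Matrix.mul_assoc]
    have hpinv : pinv (V U) = G * Bᵀ := rfl
    rw [hpinv, hPperp]
    simp only [Matrix.sub_mul, Matrix.mul_sub, Matrix.add_mul, Matrix.mul_add,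
      Matrix.one_mul, Matrix.mul_one, Matrix.neg_mul, Matrix.mul_neg,
      Matrix.transpose_sub, Matrix.transpose_mul, Matrix.transpose_one,
      Matrix.transpose_transpose, hGsym, Matrix.mul_assoc]
    abel
  -- pass to entries via mulVec
  have key : ∀ l : Fin M, HasDerivAt (fun t =>
      ((1 : Matrix (Fin M) (Fin M) ℝ) - W t * (((W t)ᵀ * W t)⁻¹ * (W t)ᵀ)) i l)
      ((-(V' * (G * Bᵀ) + B * ((-(G * (V'ᵀ * B + Bᵀ * V') * G)) * Bᵀ + G * V'ᵀ))) i l) 0 :=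
    fun l => hasDerivAt_entry hP i l
  have hfun : (fun t : ℝ =>
      (((1 - W t * pinv (W t)).mulVec f) i)) = fun t =>
      ∑ l : Fin M, ((1 : Matrix (Fin M) (Fin M) ℝ) -
        W t * (((W t)ᵀ * W t)⁻¹ * (W t)ᵀ)) i l * f l := by
    funext t
    simp [Matrix.mulVec, dotProduct, pinv, Matrix.mul_assoc]
  rw [hfun]
  have hd : HasDerivAt (fun t =>
      ∑ l : Fin M, ((1 : Matrix (Fin M) (Fin M) ℝ) -
        W t * (((W t)ᵀ * W t)⁻¹ * (W t)ᵀ)) i l * f l)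
      (∑ l : Fin M,
        ((-(V' * (G * Bᵀ) + B * ((-(G * (V'ᵀ * B + Bᵀ * V') * G)) * Bᵀ + G * V'ᵀ))) i l * f l))
      0 := HasDerivAt.fun_sum fun l _ => (key l).mul_const (f l)
  convert hd using 1
  rw [show (-((Pperp * V' * pinv (V U) + (Pperp * V' * pinv (V U))ᵀ).mulVec f))
      = ((-(V' * (G * Bᵀ) + B * ((-(G * (V'ᵀ * B + Bᵀ * V') * G)) * Bᵀ + G * V'ᵀ))).mulVec f)
    from by rw [hDeq, Matrix.neg_mulVec]]
  simp [Matrix.mulVec, dotProduct]
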